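/- Let σ and τ be faces of the standard k-simplex Δ with σ ∩ τ ≠ ∅. Let d_pl denote the Euclidean path length metric on the subcomplex σ ∪ τ (the infimum of Euclidean lengths of paths in σ ∪ τ), and let d_Δ be the Euclidean metric on Δ. Then for all x ∈ σ and y ∈ τ, d_pl(x, y) ≤ 3·√(k+1) · d_Δ(x, y). -/

import Mathlib

open scoped ENNReal
open Set

section aux

variable {E : Type*} [NormedAddCommGroup E] [NormedSpace ℝ E]

noncomputable def segPt (p q : E) (u : ℝ) : E := p + u • (q - p)

lemma segPt_zero (p q : E) : segPt p q 0 = p := by simp [segPt]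

lemma segPt_one (p q : E) : segPt p q 1 = q := by simp [segPt]

lemma edist_segPt (p q : E) (u v : ℝ) :
    edist (segPt p q u) (segPt p q v) = ENNReal.ofReal (|u - v| * ‖q - p‖) := by
  rw [edist_dist, dist_eq_norm]
  congr 1
  have : segPt p q u - segPt p q v = (u - v) • (q - p) := by
    simp only [segPt, sub_smul]; abel
  rw [this, norm_smul, Real.norm_eq_abs]

lemma continuous_segPt_comp (p q : E) (c d : ℝ) :
    Continuous fun u : ℝ => segPt p q (c * u + d) := by
  unfold segPt; fun_prop

lemma evar_aux {f : ℝ → E} {a b : ℝ} {C : ℝ≥0∞}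
    (hf : ∀ u ∈ Icc a b, ∀ v ∈ Icc a b, u ≤ v →
      edist (f u) (f v) ≤ C * ENNReal.ofReal (v - u)) :
    eVariationOn f (Icc a b) ≤ C * ENNReal.ofReal (b - a) := by
  apply iSup_le
  rintro ⟨n, ⟨u, hu, us⟩⟩
  calc ∑ i ∈ Finset.range n, edist (f (u (i+1))) (f (u i))
      ≤ ∑ i ∈ Finset.range n, C * ENNReal.ofReal (u (i+1) - u i) := by
        refine Finset.sum_le_sum fun i _ => ?_
        rw [edist_comm]
        exact hf _ (us i) _ (us (i+1)) (hu (Nat.le_succ i))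
    _ = C * ENNReal.ofReal (∑ i ∈ Finset.range n, (u (i+1) - u i)) := by
        rw [← Finset.mul_sum, ENNReal.ofReal_sum_of_nonneg]
        exact fun i _ => sub_nonneg.2 (hu (Nat.le_succ i))
    _ ≤ C * ENNReal.ofReal (b - a) := by
        gcongr
        rw [Finset.sum_range_sub]
        exact sub_le_sub (us n).2 (us 0).1

end aux

section PLAux

variable {k : ℕ}

lemma segPt_apply (p q : EuclideanSpace ℝ (Fin (k+1))) (u : ℝ) (i : Fin (k+1)) :
    segPt p q u i = p i + u * (q i - p i) := by
  simp [segPt]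

lemma segPt_mem_face {s : Finset (Fin (k+1))} {p q : EuclideanSpace ℝ (Fin (k+1))}
    (hp1 : ∀ i, 0 ≤ p i) (hp2 : ∑ i, p i = 1) (hp3 : ∀ i ∉ s, p i = 0)
    (hq1 : ∀ i, 0 ≤ q i) (hq2 : ∑ i, q i = 1) (hq3 : ∀ i ∉ s, q i = 0)
    {u : ℝ} (hu0 : 0 ≤ u) (hu1 : u ≤ 1) :
    (∀ i, 0 ≤ segPt p q u i) ∧ ∑ i, segPt p q u i = 1 ∧ ∀ i ∉ s, segPt p q u i = 0 := by
  refine ⟨fun i => ?_, ?_, fun i hi => ?_⟩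
  · rw [segPt_apply]
    nlinarith [hp1 i, hq1 i]
  · simp only [segPt_apply]
    rw [Finset.sum_add_distrib, ← Finset.mul_sum, Finset.sum_sub_distrib, hp2, hq2]
    ring
  · rw [segPt_apply, hp3 i hi, hq3 i hi]; ring

noncomputable def tildePt (m : Fin (k+1)) (t : Finset (Fin (k+1)))
    (x : EuclideanSpace ℝ (Fin (k+1))) : EuclideanSpace ℝ (Fin (k+1)) :=
  (WithLp.equiv 2 _).symm fun i => if i = m then x m + ∑ j ∈ tᶜ, x j else if i ∈ t then x i else 0

lemma tildePt_apply (m : Fin (k+1)) (t : Finset (Fin (k+1)))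
    (x : EuclideanSpace ℝ (Fin (k+1))) (i : Fin (k+1)) :
    tildePt m t x i = if i = m then x m + ∑ j ∈ tᶜ, x j else if i ∈ t then x i else 0 := rfl

lemma tildePt_face {s t : Finset (Fin (k+1))} {m : Fin (k+1)} (hms : m ∈ s) (hmt : m ∈ t)
    {x : EuclideanSpace ℝ (Fin (k+1))}
    (hx1 : ∀ i, 0 ≤ x i) (hx2 : ∑ i, x i = 1) (hx3 : ∀ i ∉ s, x i = 0) :
    (∀ i, 0 ≤ tildePt m t x i) ∧ ∑ i, tildePt m t x i = 1 ∧
      (∀ i ∉ s, tildePt m t x i = 0) ∧ (∀ i ∉ t, tildePt m t x i = 0) := by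
  have ha : 0 ≤ ∑ j ∈ tᶜ, x j := Finset.sum_nonneg fun j _ => hx1 j
  refine ⟨fun i => ?_, ?_, fun i hi => ?_, fun i hi => ?_⟩
  · rw [tildePt_apply]
    split_ifs with h1 h2
    · exact add_nonneg (hx1 m) ha
    · exact hx1 i
    · exact le_refl 0
  · have : ∀ i, tildePt m t x i
        = (if i ∈ t then x i else 0) + (if i = m then ∑ j ∈ tᶜ, x j else 0) := by
      intro i
      rw [tildePt_apply]
      by_cases h1 : i = m
      · subst h1; simp [hmt]
      · simp [h1]
    simp only [this]
    rw [Finset.sum_add_distrib, Finset.sum_ite_eq' Finset.univ m, Finset.sum_ite_mem,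
      Finset.univ_inter]
    simp only [Finset.mem_univ, if_true]
    rw [Finset.sum_add_sum_compl t x]
    exact hx2
  · have him : i ≠ m := fun h => hi (h ▸ hms)
    rw [tildePt_apply, if_neg him]
    split_ifs with h2
    · exact hx3 i hi
    · rfl
  · have him : i ≠ m := fun h => hi (h ▸ hmt)
    rw [tildePt_apply, if_neg him, if_neg hi]

lemma norm_tildePt_sub {t : Finset (Fin (k+1))} {m : Fin (k+1)} (hmt : m ∈ t)
    (x : EuclideanSpace ℝ (Fin (k+1))) (hx1 : ∀ i, 0 ≤ x i) :
    ‖tildePt m t x - x‖ ≤ Real.sqrt 2 * ∑ j ∈ tᶜ, x j := by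
  set a : ℝ := ∑ j ∈ tᶜ, x j with ha_def
  have key : ∑ i, ‖(tildePt m t x - x) i‖^2 ≤ 2 * a^2 := by
    calc ∑ i, ‖(tildePt m t x - x) i‖^2
        = ∑ i ∈ t, ‖(tildePt m t x - x) i‖^2 + ∑ i ∈ tᶜ, ‖(tildePt m t x - x) i‖^2 :=
          (Finset.sum_add_sum_compl t _).symm
      _ = a^2 + ∑ i ∈ tᶜ, (x i)^2 := by
          congr 1
          · rw [show ∑ i ∈ t, ‖(tildePt m t x - x) i‖^2
                = ∑ i ∈ t, (if i = m then a^2 else 0) from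
              Finset.sum_congr rfl fun i hi => by
                by_cases h : i = m
                · subst h
                  simp [PiLp.sub_apply, tildePt_apply, Real.norm_eq_abs, sq_abs, ha_def]
                · simp [PiLp.sub_apply, tildePt_apply, h, hi, Real.norm_eq_abs]]
            rw [Finset.sum_ite_eq' t m]
            simp [hmt]
          · refine Finset.sum_congr rfl fun i hi => ?_
            have him : i ≠ m := fun h => (Finset.mem_compl.1 hi) (h ▸ hmt)
            have hit : i ∉ t := Finset.mem_compl.1 hi
            simp [PiLp.sub_apply, tildePt_apply, him, hit, Real.norm_eq_abs, sq_abs]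
      _ ≤ a^2 + a^2 := by
          gcongr
          exact Finset.sum_sq_le_sq_sum_of_nonneg fun i _ => hx1 i
      _ = 2 * a^2 := by ring
  have ha : 0 ≤ a := Finset.sum_nonneg fun j _ => hx1 j
  rw [EuclideanSpace.norm_eq]
  refine le_trans (Real.sqrt_le_sqrt key) ?_
  rw [show (2:ℝ) * a^2 = 2 * a^2 by ring, Real.sqrt_mul (by norm_num) (a^2),
    Real.sqrt_sq ha]


lemma norm_tildePt_mid {s t : Finset (Fin (k+1))} {m : Fin (k+1)} (hms : m ∈ s) (hmt : m ∈ t)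
    {x y : EuclideanSpace ℝ (Fin (k+1))}
    (hx3 : ∀ i ∉ s, x i = 0) (hy3 : ∀ i ∉ t, y i = 0) :
    ‖tildePt m t x - tildePt m s y‖
      ≤ dist x y + |(∑ j ∈ tᶜ, x j) - (∑ j ∈ sᶜ, y j)| := by
  set a : ℝ := ∑ j ∈ tᶜ, x j
  set b : ℝ := ∑ j ∈ sᶜ, y j
  set X := tildePt m t x - tildePt m s y with hX
  set w := X - (a - b) • EuclideanSpace.single m (1:ℝ) with hw
  have h1 : ‖X‖ ≤ ‖w‖ + |a - b| := by
    have : X = w + (a - b) • EuclideanSpace.single m (1:ℝ) := by rw [hw]; abel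
    rw [this]
    refine le_trans (norm_add_le _ _) ?_
    rw [norm_smul, EuclideanSpace.norm_single, Real.norm_eq_abs, norm_one, mul_one]
  refine h1.trans (add_le_add_left ?_ _)
  rw [EuclideanSpace.norm_eq, EuclideanSpace.dist_eq]
  refine Real.sqrt_le_sqrt (Finset.sum_le_sum fun i _ => ?_)
  have hwi : w i = X i - (a - b) * (if i = m then (1:ℝ) else 0) := by
    simp [hw, PiLp.sub_apply, PiLp.smul_apply, EuclideanSpace.single_apply, smul_eq_mul]
  have hXi : X i = tildePt m t x i - tildePt m s y i := rfl
  rw [Real.norm_eq_abs, sq_abs, Real.dist_eq, sq_abs]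
  by_cases him : i = m
  · subst him
    rw [hwi, hXi, tildePt_apply, tildePt_apply, if_pos rfl, if_pos rfl, if_pos rfl]
    ring_nf
    apply le_of_eq
    ring
  · rw [hwi, hXi, tildePt_apply, tildePt_apply, if_neg him, if_neg him]
    simp only [if_neg him, mul_zero, sub_zero]
    by_cases hit : i ∈ t <;> by_cases his : i ∈ s
    · simp [hit, his]
    · rw [if_pos hit, if_neg his, hx3 i his]
      simp [sq_nonneg]
    · rw [if_neg hit, if_pos his, hy3 i hit]
      simp [sq_nonneg]
    · rw [if_neg hit, if_neg his, hx3 i his, hy3 i hit]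

lemma masses_le {s t : Finset (Fin (k+1))} {m : Fin (k+1)} (hms : m ∈ s) (hmt : m ∈ t)
    {x y : EuclideanSpace ℝ (Fin (k+1))}
    (hx3 : ∀ i ∉ s, x i = 0) (hy3 : ∀ i ∉ t, y i = 0) :
    (∑ j ∈ tᶜ, x j) + (∑ j ∈ sᶜ, y j) ≤ Real.sqrt k * dist x y := by
  classical
  set U1 : Finset (Fin (k+1)) := tᶜ ∩ s
  set U2 : Finset (Fin (k+1)) := sᶜ ∩ t
  have ha : (∑ j ∈ tᶜ, x j) = ∑ j ∈ U1, (x j - y j) := by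
    rw [← Finset.sum_subset (Finset.inter_subset_left : U1 ⊆ tᶜ)
      (fun i hi hiU => ?_)]
    · refine Finset.sum_congr rfl fun i hi => ?_
      rw [hy3 i (Finset.mem_compl.1 (Finset.mem_of_mem_inter_left hi))]
      ring
    · have : i ∉ s := fun h => hiU (Finset.mem_inter.2 ⟨hi, h⟩)
      exact hx3 i this
  have hb : (∑ j ∈ sᶜ, y j) = ∑ j ∈ U2, (y j - x j) := by
    rw [← Finset.sum_subset (Finset.inter_subset_left : U2 ⊆ sᶜ)
      (fun i hi hiU => ?_)]
    · refine Finset.sum_congr rfl fun i hi => ?_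
      rw [hx3 i (Finset.mem_compl.1 (Finset.mem_of_mem_inter_left hi))]
      ring
    · have : i ∉ t := fun h => hiU (Finset.mem_inter.2 ⟨hi, h⟩)
      exact hy3 i this
  have hdisj : Disjoint U1 U2 := by
    refine Finset.disjoint_left.2 fun i hi1 hi2 => ?_
    exact (Finset.mem_compl.1 (Finset.mem_of_mem_inter_left hi2))
      (Finset.mem_of_mem_inter_right hi1)
  set U : Finset (Fin (k+1)) := U1 ∪ U2
  have hS : (∑ j ∈ tᶜ, x j) + (∑ j ∈ sᶜ, y j) ≤ ∑ i ∈ U, |x i - y i| := by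
    rw [ha, hb, Finset.sum_union hdisj]
    refine add_le_add (Finset.sum_le_sum fun i _ => le_abs_self _)
      (Finset.sum_le_sum fun i _ => ?_)
    rw [abs_sub_comm]
    exact le_abs_self _
  have hcard : (U.card : ℝ) ≤ k := by
    have hsub : U ⊆ Finset.univ.erase m := by
      intro i hi
      refine Finset.mem_erase.2 ⟨?_, Finset.mem_univ i⟩
      rintro rfl
      rcases Finset.mem_union.1 hi with h | h
      · exact (Finset.mem_compl.1 (Finset.mem_of_mem_inter_left h)) hmt
      · exact (Finset.mem_compl.1 (Finset.mem_of_mem_inter_left h)) hms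
    have := Finset.card_le_card hsub
    rw [Finset.card_erase_of_mem (Finset.mem_univ m), Finset.card_univ, Fintype.card_fin] at this
    exact_mod_cast this.trans_eq (Nat.add_sub_cancel k 1)
  have hd2 : dist x y ^ 2 = ∑ i, (x i - y i)^2 := by
    rw [EuclideanSpace.dist_eq, Real.sq_sqrt (Finset.sum_nonneg fun i _ => sq_nonneg _)]
    exact Finset.sum_congr rfl fun i _ => by rw [Real.dist_eq, sq_abs]
  have hS2 : (∑ i ∈ U, |x i - y i|)^2 ≤ k * dist x y ^ 2 := by
    refine le_trans (sq_sum_le_card_mul_sum_sq) ?_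
    rw [hd2]
    have h1 : ∑ i ∈ U, |x i - y i| ^ 2 ≤ ∑ i, (x i - y i)^2 := by
      refine le_trans (le_of_eq (Finset.sum_congr rfl fun i _ => sq_abs _)) ?_
      exact Finset.sum_le_sum_of_subset_of_nonneg (Finset.subset_univ U)
        fun i _ _ => sq_nonneg _
    have h2 : (0:ℝ) ≤ ∑ i ∈ U, |x i - y i| ^ 2 :=
      Finset.sum_nonneg fun i _ => sq_nonneg _
    calc (U.card : ℝ) * ∑ i ∈ U, |x i - y i| ^ 2
        ≤ (k:ℝ) * ∑ i ∈ U, |x i - y i| ^ 2 := by gcongr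
      _ ≤ (k:ℝ) * ∑ i, (x i - y i)^2 :=
          mul_le_mul_of_nonneg_left h1 (Nat.cast_nonneg k)
  have hSnn : (0:ℝ) ≤ ∑ i ∈ U, |x i - y i| := Finset.sum_nonneg fun i _ => abs_nonneg _
  refine hS.trans ?_
  have := Real.sqrt_le_sqrt hS2
  rw [Real.sqrt_sq hSnn, Real.sqrt_mul (Nat.cast_nonneg k), Real.sqrt_sq dist_nonneg] at this
  exact this

end PLAux

lemma numeric_key (r : ℝ) (hr : 0 ≤ r) :
    (Real.sqrt 2 + 1) * Real.sqrt r + 1 ≤ 3 * Real.sqrt (r + 1) := by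
  set u := Real.sqrt r with hu
  set v := Real.sqrt (r + 1) with hv
  have hu2 : u ^ 2 = r := Real.sq_sqrt hr
  have hv2 : v ^ 2 = r + 1 := Real.sq_sqrt (by linarith)
  have hun : 0 ≤ u := Real.sqrt_nonneg r
  have hvn : 0 ≤ v := Real.sqrt_nonneg _
  have hw : Real.sqrt 2 ≤ 3 / 2 := by
    rw [show (3:ℝ)/2 = Real.sqrt ((3/2)^2) from (Real.sqrt_sq (by norm_num)).symm]
    exact Real.sqrt_le_sqrt (by norm_num)
  have h1 : ((5/2) * u + 1) ^ 2 ≤ (3 * v) ^ 2 := by nlinarith [sq_nonneg (11 * u - 10)]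
  have h2 : (5/2) * u + 1 ≤ 3 * v := by
    have := Real.sqrt_le_sqrt h1
    rwa [Real.sqrt_sq (by linarith), Real.sqrt_sq (by linarith)] at this
  nlinarith [hw, hun]

set_option maxHeartbeats 2000000 in
/-- For intersecting faces `σ`, `τ` of the standard `k`-simplex, the Euclidean path
length metric on the subcomplex `σ ∪ τ` is bounded by `3√(k+1)` times the Euclidean
metric: `d_pl(x,y) ≤ 3√(k+1)·d_Δ(x,y)` for `x ∈ σ`, `y ∈ τ`. -/
theorem path_length_metric_on_two_faces
    (k : ℕ) (s t : Finset (Fin (k + 1))) (hs : s.Nonempty) (ht : t.Nonempty)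
    (hst : (s ∩ t).Nonempty)
    (σ τ : Set (EuclideanSpace ℝ (Fin (k + 1))))
    (hσ : σ = {z | (∀ i, 0 ≤ z i) ∧ ∑ i, z i = 1 ∧ ∀ i ∉ s, z i = 0})
    (hτ : τ = {z | (∀ i, 0 ≤ z i) ∧ ∑ i, z i = 1 ∧ ∀ i ∉ t, z i = 0})
    (dpl : EuclideanSpace ℝ (Fin (k + 1)) → EuclideanSpace ℝ (Fin (k + 1)) → ℝ≥0∞)
    (hdpl : dpl = fun x y => sInf {L : ℝ≥0∞ | ∃ γ : ℝ → EuclideanSpace ℝ (Fin (k + 1)),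
      ContinuousOn γ (Set.Icc 0 1) ∧ γ 0 = x ∧ γ 1 = y ∧
      (∀ u ∈ Set.Icc (0 : ℝ) 1, γ u ∈ σ ∪ τ) ∧ L = eVariationOn γ (Set.Icc 0 1)})
    (x y : EuclideanSpace ℝ (Fin (k + 1))) (hx : x ∈ σ) (hy : y ∈ τ) :
    dpl x y ≤ ENNReal.ofReal (3 * Real.sqrt (k + 1) * dist x y) := by

  subst hσ hτ hdpl
  classical
  obtain ⟨m, hm⟩ := hst
  rw [Finset.mem_inter] at hm
  obtain ⟨hms, hmt⟩ := hm
  obtain ⟨hx1, hx2, hx3⟩ := hx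
  obtain ⟨hy1, hy2, hy3⟩ := hy
  set xt := tildePt m t x with hxt_def
  set yt := tildePt m s y with hyt_def
  obtain ⟨hxt1, hxt2, hxt3s, hxt3t⟩ := tildePt_face hms hmt hx1 hx2 hx3
  obtain ⟨hyt1, hyt2, hyt3t, hyt3s⟩ := tildePt_face hmt hms hy1 hy2 hy3
  set γ : ℝ → EuclideanSpace ℝ (Fin (k + 1)) := fun u =>
    if u ≤ 1/3 then segPt x xt (3*u)
    else if u ≤ 2/3 then segPt xt yt (3*u - 1)
    else segPt yt y (3*u - 2) with hγ
  have hcont : Continuous γ := by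
    rw [hγ]
    refine Continuous.if_le ?_ ?_ continuous_id continuous_const ?_
    · unfold segPt; fun_prop
    · refine Continuous.if_le ?_ ?_ continuous_id continuous_const ?_
      · unfold segPt; fun_prop
      · unfold segPt; fun_prop
      · intro u hu
        subst hu
        norm_num [segPt]
    · intro u hu
      subst hu
      norm_num [segPt]
  have hγ0 : γ 0 = x := by
    rw [hγ]
    norm_num [segPt]
  have hγ1 : γ 1 = y := by
    rw [hγ]
    norm_num [segPt]
  have hmem : ∀ u ∈ Icc (0:ℝ) 1, γ u ∈
      {z : EuclideanSpace ℝ (Fin (k+1)) | (∀ i, 0 ≤ z i) ∧ ∑ i, z i = 1 ∧ ∀ i ∉ s, z i = 0} ∪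
      {z : EuclideanSpace ℝ (Fin (k+1)) | (∀ i, 0 ≤ z i) ∧ ∑ i, z i = 1 ∧ ∀ i ∉ t, z i = 0} := by
    intro u hu
    rw [hγ]
    simp only
    split_ifs with h1 h2
    · exact Or.inl (segPt_mem_face hx1 hx2 hx3 hxt1 hxt2 hxt3s
        (by linarith [hu.1]) (by linarith))
    · exact Or.inl (segPt_mem_face hxt1 hxt2 hxt3s hyt1 hyt2 hyt3s
        (by push_neg at h1; linarith) (by linarith))
    · exact Or.inr (segPt_mem_face hyt1 hyt2 hyt3t hy1 hy2 hy3
        (by push_neg at h2; linarith) (by linarith [hu.2]))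
  refine le_trans (sInf_le ⟨γ, hcont.continuousOn, hγ0, hγ1, hmem, rfl⟩) ?_
  -- value lemmas on subintervals
  have hval1 : ∀ u ∈ Icc (0:ℝ) (1/3), γ u = segPt x xt (3*u) := by
    intro u hu
    rw [hγ]
    simp only
    rw [if_pos hu.2]
  have hval2 : ∀ u ∈ Icc (1/3:ℝ) (2/3), γ u = segPt xt yt (3*u - 1) := by
    intro u hu
    rw [hγ]
    simp only
    by_cases h1 : u ≤ 1/3
    · have : u = 1/3 := le_antisymm h1 hu.1
      subst this
      norm_num [segPt]
    · rw [if_neg h1, if_pos hu.2]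
  have hval3 : ∀ u ∈ Icc (2/3:ℝ) 1, γ u = segPt yt y (3*u - 2) := by
    intro u hu
    rw [hγ]
    simp only
    have h1 : ¬ u ≤ 1/3 := by push_neg; linarith [hu.1]
    by_cases h2 : u ≤ 2/3
    · have : u = 2/3 := le_antisymm h2 hu.1
      subst this
      rw [if_neg h1, if_pos le_rfl]
      norm_num [segPt]
    · rw [if_neg h1, if_neg h2]
  -- variation bound on each subinterval
  have epiece : ∀ (a b c : ℝ) (p q : EuclideanSpace ℝ (Fin (k+1))),
      (∀ u ∈ Icc a b, γ u = segPt p q (3*u + c)) →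
      eVariationOn γ (Icc a b) ≤ ENNReal.ofReal (3 * ‖q - p‖) * ENNReal.ofReal (b - a) := by
    intro a b c p q hval
    refine evar_aux fun u hu v hv huv => ?_
    rw [hval u hu, hval v hv, edist_segPt, ← ENNReal.ofReal_mul (by positivity)]
    apply ENNReal.ofReal_le_ofReal
    have : |3*u + c - (3*v + c)| = 3*(v - u) := by
      rw [show 3*u + c - (3*v + c) = -(3*(v-u)) by ring, abs_neg,
        abs_of_nonneg (by linarith)]
    rw [this]
    apply le_of_eq
    ring
  have e1 := epiece 0 (1/3) 0 x xt (by intro u hu; rw [hval1 u hu]; ring_nf)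
  have e2 := epiece (1/3) (2/3) (-1) xt yt (by
    intro u hu; rw [hval2 u hu]; ring_nf)
  have e3 := epiece (2/3) 1 (-2) yt y (by
    intro u hu; rw [hval3 u hu]; ring_nf)
  have hsplit1 : eVariationOn γ (Icc 0 (1/3)) + eVariationOn γ (Icc (1/3) 1)
      = eVariationOn γ (Icc (0:ℝ) 1) := by
    have := eVariationOn.Icc_add_Icc γ (s := (Set.univ : Set ℝ))
      (by norm_num : (0:ℝ) ≤ 1/3) (by norm_num : (1/3:ℝ) ≤ 1) (Set.mem_univ _)
    simpa using this
  have hsplit2 : eVariationOn γ (Icc (1/3) (2/3)) + eVariationOn γ (Icc (2/3) 1)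
      = eVariationOn γ (Icc (1/3:ℝ) 1) := by
    have := eVariationOn.Icc_add_Icc γ (s := (Set.univ : Set ℝ))
      (by norm_num : (1/3:ℝ) ≤ 2/3) (by norm_num : (2/3:ℝ) ≤ 1) (Set.mem_univ _)
    simpa using this
  -- real estimate
  set A := ‖xt - x‖ with hA
  set B := ‖yt - xt‖ with hB
  set C := ‖y - yt‖ with hC
  have hreal : A + B + C ≤ 3 * Real.sqrt (k + 1) * dist x y := by
    set a : ℝ := ∑ j ∈ tᶜ, x j with ha_def
    set b : ℝ := ∑ j ∈ sᶜ, y j with hb_def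
    have han : 0 ≤ a := Finset.sum_nonneg fun j _ => hx1 j
    have hbn : 0 ≤ b := Finset.sum_nonneg fun j _ => hy1 j
    have hAe : A ≤ Real.sqrt 2 * a := norm_tildePt_sub hmt x hx1
    have hCe : C ≤ Real.sqrt 2 * b := by
      rw [hC, norm_sub_rev]
      exact norm_tildePt_sub hms y hy1
    have hBe : B ≤ dist x y + |a - b| := by
      rw [hB, norm_sub_rev]
      exact norm_tildePt_mid hms hmt hx3 hy3
    have hmass : a + b ≤ Real.sqrt k * dist x y := masses_le hms hmt hx3 hy3
    have habs : |a - b| ≤ a + b := abs_le.2 ⟨by linarith, by linarith⟩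
    have hkey := numeric_key k (Nat.cast_nonneg k)
    have hs2 : 0 ≤ Real.sqrt 2 := Real.sqrt_nonneg 2
    have hd : 0 ≤ dist x y := dist_nonneg
    have step1 : A + B + C ≤ (Real.sqrt 2 + 1) * (a + b) + dist x y := by linarith
    have step2 : (Real.sqrt 2 + 1) * (a + b) ≤ (Real.sqrt 2 + 1) * (Real.sqrt k * dist x y) :=
      mul_le_mul_of_nonneg_left hmass (by linarith)
    have step3 : ((Real.sqrt 2 + 1) * Real.sqrt k + 1) * dist x y
        ≤ (3 * Real.sqrt (k + 1)) * dist x y :=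
      mul_le_mul_of_nonneg_right (by
        have : Real.sqrt ((k:ℝ)) = Real.sqrt k := rfl
        push_cast
        linarith [hkey]) hd
    nlinarith [step1, step2, step3]
  calc eVariationOn γ (Icc (0:ℝ) 1)
      = eVariationOn γ (Icc 0 (1/3)) + (eVariationOn γ (Icc (1/3) (2/3))
          + eVariationOn γ (Icc (2/3) 1)) := by rw [hsplit2, hsplit1]
    _ ≤ ENNReal.ofReal (3 * A) * ENNReal.ofReal (1/3 - 0)
        + (ENNReal.ofReal (3 * B) * ENNReal.ofReal (2/3 - 1/3)
          + ENNReal.ofReal (3 * C) * ENNReal.ofReal (1 - 2/3)) :=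
        add_le_add e1 (add_le_add e2 e3)
    _ = ENNReal.ofReal A + (ENNReal.ofReal B + ENNReal.ofReal C) := by
        rw [← ENNReal.ofReal_mul (by positivity), ← ENNReal.ofReal_mul (by positivity),
          ← ENNReal.ofReal_mul (by positivity),
          show 3 * A * (1/3 - 0) = A by ring, show 3 * B * (2/3 - 1/3) = B by ring,
          show 3 * C * (1 - 2/3) = C by ring]
    _ = ENNReal.ofReal (A + B + C) := by
        rw [← ENNReal.ofReal_add (norm_nonneg _) (norm_nonneg _),
          ← ENNReal.ofReal_add (norm_nonneg _) (by positivity), add_assoc]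
    _ ≤ ENNReal.ofReal (3 * Real.sqrt (k + 1) * dist x y) := ENNReal.ofReal_le_ofReal hreal
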